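/- Let 0<ν<1 and X≥0. Then |1+X e^{iπν}|^{-2} ≤ (1−ν)^{-2}(1+X²)^{-1}, and likewise |1+X e^{-iπν}|^{-2} ≤ (1−ν)^{-2}(1+X²)^{-1}; equivalently, |1+X e^{±iπν}|² ≥ (1−ν)²(1+X²). -/

import Mathlib

open Real

lemma abs_sq_aux (X θ : ℝ) :
    ‖1 + (X : ℂ) * Complex.exp (↑θ * Complex.I)‖ ^ 2
      = 1 + 2 * X * Real.cos θ + X ^ 2 := by
  rw [Complex.sq_norm, Complex.exp_mul_I, Complex.normSq_apply]
  simp [Complex.cos_ofReal_re, Complex.sin_ofReal_re]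
  nlinarith [Real.sin_sq_add_cos_sq θ]

lemma key_aux (ν X : ℝ) (hν0 : 0 < ν) (hν1 : ν < 1) (hX : 0 ≤ X) :
    (1 - ν) ^ 2 * (1 + X ^ 2) ≤ 1 + 2 * X * Real.cos (Real.pi * ν) + X ^ 2 := by
  rcases le_or_gt 0 (Real.cos (Real.pi * ν)) with hc | hc
  · nlinarith [mul_nonneg hX hc,
      mul_pos (mul_pos hν0 (by linarith : (0:ℝ) < 2 - ν))
        (by positivity : (0:ℝ) < 1 + X ^ 2)]
  · set μ := 1 - ν with hμ
    have hμ0 : 0 < μ := by simp only [hμ]; linarith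
    have hμ1 : μ ≤ 1 := by simp only [hμ]; linarith
    have hπ := Real.pi_pos
    have hsin : μ ≤ Real.sin (Real.pi * μ / 2) := by
      have h1 : 0 ≤ Real.pi * μ / 2 := by positivity
      have h2 : Real.pi * μ / 2 ≤ Real.pi / 2 := by nlinarith
      have := Real.mul_le_sin h1 h2
      calc μ = 2 / Real.pi * (Real.pi * μ / 2) := by field_simp
        _ ≤ _ := this
    have hcosμ : Real.cos (Real.pi * μ) ≤ 1 - μ ^ 2 := by
      have h2 := Real.cos_two_mul (Real.pi * μ / 2)
      rw [show 2 * (Real.pi * μ / 2) = Real.pi * μ by ring] at h2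
      nlinarith [Real.sin_sq_add_cos_sq (Real.pi * μ / 2)]
    have hcos : -Real.cos (Real.pi * ν) ≤ 1 - μ ^ 2 := by
      have : Real.cos (Real.pi * μ) = -Real.cos (Real.pi * ν) := by
        rw [show Real.pi * μ = Real.pi - Real.pi * ν by rw [hμ]; ring, Real.cos_pi_sub]
      linarith
    nlinarith [mul_nonneg (sq_nonneg (X - 1)) (neg_nonneg.2 hc.le),
      mul_nonneg (by positivity : (0:ℝ) ≤ 1 + X ^ 2)
        (by linarith : (0:ℝ) ≤ 1 - μ ^ 2 + Real.cos (Real.pi * ν))]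

theorem stmt7 (ν X : ℝ) (hν0 : 0 < ν) (hν1 : ν < 1) (hX : 0 ≤ X) :
    (‖1 + (X : ℂ) * Complex.exp (↑(Real.pi * ν) * Complex.I)‖ ^ 2)⁻¹
        ≤ ((1 - ν) ^ 2)⁻¹ * (1 + X ^ 2)⁻¹ ∧
    (‖1 + (X : ℂ) * Complex.exp (-↑(Real.pi * ν) * Complex.I)‖ ^ 2)⁻¹
        ≤ ((1 - ν) ^ 2)⁻¹ * (1 + X ^ 2)⁻¹ := by
  have hkey := key_aux ν X hν0 hν1 hX
  have h1ν : 0 < 1 - ν := by linarith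
  have hpos : 0 < (1 - ν) ^ 2 * (1 + X ^ 2) := by positivity
  constructor
  · rw [abs_sq_aux, ← mul_inv]
    exact inv_anti₀ hpos hkey
  · have : (-↑(Real.pi * ν) : ℂ) = ((-(Real.pi * ν) : ℝ) : ℂ) := by push_cast; ring
    rw [this, abs_sq_aux, Real.cos_neg, ← mul_inv]
    exact inv_anti₀ hpos hkey
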